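/- arXiv:1902.05404 — 4 statements merged into one kernel-verified Lean document; each statement's English description precedes it below -/
import Mathlib

section
/- Let F and F̃ be self-adjoint Hilbert–Schmidt operators on a separable Hilbert space H, and let θ : ℝ → ℝ be Lipschitz continuous with constant L_θ ≥ 0. Then the operator functions satisfy ‖θ(F) − θ(F̃)‖_HS ≤ L_θ ‖F − F̃‖_HS. -/
open scoped NNReal

lemma inner_eig_apply {H : Type*} [NormedAddCommGroup H] [InnerProductSpace ℝ H]
    [CompleteSpace H] {ι : Type*} (b : HilbertBasis ι ℝ H) (T : H →L[ℝ] H) (ν : ι → ℝ)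
    (hT : ∀ j, T (b j) = ν j • b j) (x : H) (j : ι) :
    inner ℝ (b j) (T x) = ν j * (inner ℝ (b j) x : ℝ) := by
  classical
  have h1 : HasSum (fun k => b.repr x k • b k) x := b.hasSum_repr x
  have h2 : HasSum (fun k => (b.repr x k : ℝ) • T (b k)) (T x) := by
    have := h1.mapL T
    simpa using this
  have h3 : HasSum (fun k => (innerSL ℝ (b j)) ((b.repr x k : ℝ) • T (b k)))
      ((innerSL ℝ (b j)) (T x)) := h2.mapL (innerSL ℝ (b j))
  have horth := b.orthonormal
  have h4 : (fun k => (innerSL ℝ (b j)) ((b.repr x k : ℝ) • T (b k))) =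
      fun k => if k = j then ν j * (inner ℝ (b j) x : ℝ) else 0 := by
    funext k
    rw [hT k]
    simp only [innerSL_apply_apply, inner_smul_right, real_inner_smul_right]
    rw [orthonormal_iff_ite.mp horth]
    by_cases h : k = j
    · subst h; simp [b.repr_apply_apply, mul_comm]
    · simp [h, Ne.symm h]
  rw [h4] at h3
  have h5 : HasSum (fun k => if k = j then ν j * (inner ℝ (b j) x : ℝ) else 0)
      (ν j * (inner ℝ (b j) x : ℝ)) := hasSum_ite_eq j _
  simpa using h3.unique h5

lemma parseval_sq {H : Type*} [NormedAddCommGroup H] [InnerProductSpace ℝ H]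
    [CompleteSpace H] {ι : Type*} (b : HilbertBasis ι ℝ H) (y : H) :
    HasSum (fun j => (inner ℝ (b j) y : ℝ) ^ 2) (‖y‖ ^ 2) := by
  have := b.hasSum_inner_mul_inner y y
  rw [real_inner_self_eq_norm_sq] at this
  convert this using 2 with j
  · rfl
  rw [real_inner_comm]
  ring

/-- Operator Lipschitz property of a scalar Lipschitz function under functional calculus,
in Hilbert–Schmidt norm.  The functional calculus `θF = θ(F)`, `θFtil = θ(F̃)` is encoded via
orthonormal eigenbases `e`, `etil` of the self-adjoint Hilbert–Schmidt operators `F`, `F̃`,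
and the Hilbert–Schmidt norm is computed as `√(∑ ‖·(e i)‖²)` over the Hilbert basis `e`. -/
theorem lipschitz_functional_calculus_HS
    {H : Type*} [NormedAddCommGroup H] [InnerProductSpace ℝ H] [CompleteSpace H]
    {ι : Type*} (e etil : HilbertBasis ι ℝ H)
    (F Ftil θF θFtil : H →L[ℝ] H) (μ μtil : ι → ℝ) (θ : ℝ → ℝ) (Lθ : ℝ≥0)
    (hF : IsSelfAdjoint F) (hFtil : IsSelfAdjoint Ftil)
    (hFe : ∀ i, F (e i) = μ i • e i) (hFte : ∀ i, Ftil (etil i) = μtil i • etil i)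
    (hθF : ∀ i, θF (e i) = θ (μ i) • e i) (hθFt : ∀ i, θFtil (etil i) = θ (μtil i) • etil i)
    (hθ : LipschitzWith Lθ θ)
    (hHS : Summable fun i => ‖(F - Ftil) (e i)‖ ^ 2)
    (hHS' : Summable fun i => ‖(θF - θFtil) (e i)‖ ^ 2) :
    Real.sqrt (∑' i, ‖(θF - θFtil) (e i)‖ ^ 2) ≤
      Lθ * Real.sqrt (∑' i, ‖(F - Ftil) (e i)‖ ^ 2) := by
  -- key pointwise bound
  have key : ∀ i, ‖(θF - θFtil) (e i)‖ ^ 2 ≤ (Lθ : ℝ) ^ 2 * ‖(F - Ftil) (e i)‖ ^ 2 := by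
    intro i
    have hy := parseval_sq etil ((θF - θFtil) (e i))
    have hz := parseval_sq etil ((F - Ftil) (e i))
    have hz' : HasSum (fun j => (Lθ : ℝ) ^ 2 * (inner ℝ (etil j) ((F - Ftil) (e i)) : ℝ) ^ 2)
        ((Lθ : ℝ) ^ 2 * ‖(F - Ftil) (e i)‖ ^ 2) := hz.mul_left _
    refine hasSum_le (fun j => ?_) hy hz'
    have hyj : (inner ℝ (etil j) ((θF - θFtil) (e i)) : ℝ) =
        (θ (μ i) - θ (μtil j)) * (inner ℝ (etil j) (e i) : ℝ) := by
      rw [ContinuousLinearMap.sub_apply, inner_sub_right, hθF i,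
        inner_eig_apply etil θFtil (fun k => θ (μtil k)) hθFt (e i) j,
        real_inner_smul_right]
      ring
    have hzj : (inner ℝ (etil j) ((F - Ftil) (e i)) : ℝ) =
        (μ i - μtil j) * (inner ℝ (etil j) (e i) : ℝ) := by
      rw [ContinuousLinearMap.sub_apply, inner_sub_right, hFe i,
        inner_eig_apply etil Ftil μtil hFte (e i) j, real_inner_smul_right]
      ring
    rw [hyj, hzj]
    have hlip : |θ (μ i) - θ (μtil j)| ≤ (Lθ : ℝ) * |μ i - μtil j| := by
      have := hθ.dist_le_mul (μ i) (μtil j)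
      simpa [Real.dist_eq] using this
    calc ((θ (μ i) - θ (μtil j)) * (inner ℝ (etil j) (e i) : ℝ)) ^ 2
        = (θ (μ i) - θ (μtil j)) ^ 2 * (inner ℝ (etil j) (e i) : ℝ) ^ 2 := by ring
      _ ≤ ((Lθ : ℝ) * |μ i - μtil j|) ^ 2 * (inner ℝ (etil j) (e i) : ℝ) ^ 2 := by
          apply mul_le_mul_of_nonneg_right _ (sq_nonneg _)
          rw [← sq_abs]
          exact pow_le_pow_left₀ (abs_nonneg _) hlip 2
      _ = (Lθ : ℝ) ^ 2 * ((μ i - μtil j) * (inner ℝ (etil j) (e i) : ℝ)) ^ 2 := by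
          rw [mul_pow, sq_abs]; ring
  have hsum : (∑' i, ‖(θF - θFtil) (e i)‖ ^ 2) ≤
      (Lθ : ℝ) ^ 2 * ∑' i, ‖(F - Ftil) (e i)‖ ^ 2 := by
    rw [← tsum_mul_left]
    exact Summable.tsum_le_tsum key hHS' (hHS.mul_left _)
  calc Real.sqrt (∑' i, ‖(θF - θFtil) (e i)‖ ^ 2)
      ≤ Real.sqrt ((Lθ : ℝ) ^ 2 * ∑' i, ‖(F - Ftil) (e i)‖ ^ 2) := Real.sqrt_le_sqrt hsum
    _ = (Lθ : ℝ) * Real.sqrt (∑' i, ‖(F - Ftil) (e i)‖ ^ 2) := by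
        rw [Real.sqrt_mul (sq_nonneg _), Real.sqrt_sq Lθ.coe_nonneg]
end

section
/- Let T be a positive self-adjoint bounded operator on a Hilbert space H₁, let φ be a continuous nondecreasing index function on [0, ‖T‖] with φ(0) = 0 such that t ↦ t/φ(t) is nondecreasing, and suppose f_ρ − f̄ = φ(T)g with ‖g‖ ≤ R. Define f_λ = (T + λI)^{-1}(T f_ρ + λ f̄) for λ > 0 with λ ≤ ‖T‖. Then ‖f_λ − f_ρ‖ ≤ R φ(λ). -/
open RealInnerProductSpace

set_option maxHeartbeats 1000000


/-- Approximation error bound for Tikhonov regularization under a general source condition.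
`T` is a positive self-adjoint bounded operator diagonalized by the Hilbert basis `e`
with eigenvalues `μ i ∈ [0, ‖T‖]`, `Φ = φ(T)` is the functional calculus of the index
function `φ`, the source condition reads `fρ - fbar = φ(T) g` with `‖g‖ ≤ R`, and
`flam = (T + λI)⁻¹(T fρ + λ fbar)`.  Then `‖flam - fρ‖ ≤ R φ(λ)`. -/
theorem tikhonov_approximation_error
    {H : Type*} [NormedAddCommGroup H] [InnerProductSpace ℝ H] [CompleteSpace H]
    {ι : Type*} (e : HilbertBasis ι ℝ H)
    (T Φ : H →L[ℝ] H) (μ : ι → ℝ) (φ : ℝ → ℝ) (fρ fbar flam g : H) (R lam : ℝ)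
    (hT : T.IsPositive)
    (hTe : ∀ i, T (e i) = μ i • e i) (hμ : ∀ i, μ i ∈ Set.Icc (0 : ℝ) ‖T‖)
    (hΦ : ∀ i, Φ (e i) = φ (μ i) • e i)
    (hφc : ContinuousOn φ (Set.Icc 0 ‖T‖)) (hφ0 : φ 0 = 0)
    (hφmono : MonotoneOn φ (Set.Icc 0 ‖T‖))
    (hratio : ∀ s t : ℝ, 0 < s → s ≤ t → t ≤ ‖T‖ → s / φ s ≤ t / φ t)
    (hsrc : fρ - fbar = Φ g) (hg : ‖g‖ ≤ R)
    (hlam : 0 < lam) (hlam' : lam ≤ ‖T‖)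
    (hflam : (T + lam • ContinuousLinearMap.id ℝ H) flam = T fρ + lam • fbar) :
    ‖flam - fρ‖ ≤ R * φ lam := by
  classical
  have hlamIcc : lam ∈ Set.Icc (0:ℝ) ‖T‖ := ⟨hlam.le, hlam'⟩
  have hφlam0 : 0 ≤ φ lam := by
    have := hφmono (Set.left_mem_Icc.2 (le_trans hlam.le hlam')) hlamIcc hlam.le
    simpa [hφ0] using this
  have hφnonneg : ∀ t, t ∈ Set.Icc (0:ℝ) ‖T‖ → 0 ≤ φ t := by
    intro t ht
    have := hφmono (Set.left_mem_Icc.2 (le_trans hlam.le hlam')) ht ht.1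
    simpa [hφ0] using this
  -- Key scalar inequality
  have key : ∀ t, t ∈ Set.Icc (0:ℝ) ‖T‖ → lam * φ t ≤ (t + lam) * φ lam := by
    intro t ht
    rcases le_or_gt t lam with h | h
    · calc lam * φ t ≤ lam * φ lam := by
            exact mul_le_mul_of_nonneg_left (hφmono ht hlamIcc h) hlam.le
        _ ≤ (t + lam) * φ lam := by nlinarith [hφlam0, ht.1]
    · -- lam < t
      rcases eq_or_lt_of_le hφlam0 with hz | hpos
      · -- φ lam = 0 ; show φ t = 0 by IVT argument
        by_contra hcon
        push_neg at hcon
        have hφt : 0 < φ t := by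
          by_contra h'
          push_neg at h'
          have : lam * φ t ≤ 0 := mul_nonpos_of_nonneg_of_nonpos hlam.le h'
          exact absurd this (by simpa [← hz] using hcon)
        set c := lam * φ t / t with hc
        have htpos : (0:ℝ) < t := lt_trans hlam h
        have hcpos : 0 < c := by positivity
        have hcle : c ≤ φ t := by
          rw [hc, div_le_iff₀ htpos]
          nlinarith
        -- IVT: there is s ∈ [lam, t] with φ s = c/2
        have hsub : Set.Icc lam t ⊆ Set.Icc (0:ℝ) ‖T‖ :=
          Set.Icc_subset_Icc hlam.le ht.2
        have hivt := intermediate_value_Icc h.le (hφc.mono hsub)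
        have hmem : c / 2 ∈ Set.Icc (φ lam) (φ t) := by
          constructor
          · rw [← hz]; positivity
          · linarith
        obtain ⟨s, hs, hseq⟩ := hivt hmem
        have hspos : 0 < s := lt_of_lt_of_le hlam hs.1
        have := hratio s t hspos hs.2 ht.2
        rw [hseq] at this
        have hφs : (0:ℝ) < c / 2 := by positivity
        rw [div_le_div_iff₀ hφs hφt] at this
        -- s * φ t ≤ t * (c/2) = lam * φ t / 2
        have : s * φ t ≤ lam * φ t / 2 := by
          have ht2 : t * (c / 2) = lam * φ t / 2 := by
            field_simp [hc]
            rw [hc]; field_simp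
          linarith [this, ht2.symm.le]
        nlinarith [hs.1]
      · -- φ lam > 0
        have := hratio lam t hlam h.le ht.2
        have hφt : 0 < φ t := lt_of_lt_of_le hpos (hφmono hlamIcc ht h.le)
        rw [div_le_div_iff₀ hpos hφt] at this
        nlinarith
  -- Self-adjointness
  have hsym : (T : H →ₗ[ℝ] H).IsSymmetric :=
    hT.1
  -- coordinates
  set x := flam - fρ with hx
  have hcoordT : ∀ (v : H) (i : ι), ⟪e i, T v⟫ = μ i * ⟪e i, v⟫ := by
    intro v i
    have h := hsym (e i) v
    simp only [ContinuousLinearMap.coe_coe] at h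
    rw [← h, hTe i, real_inner_smul_left]
  have hΦg : ∀ i, ⟪e i, Φ g⟫ = φ (μ i) * ⟪e i, g⟫ := by
    intro i
    have h1 : HasSum (fun j => (e.repr g j) • (e j : H)) g := e.hasSum_repr g
    have h2 : HasSum (fun j => (e.repr g j * φ (μ j)) • (e j : H)) (Φ g) := by
      have := h1.mapL Φ
      convert this using 2 with j
      rw [map_smul, hΦ j, smul_smul]
    have h3 : HasSum (fun j => (innerSL ℝ (e i)) ((e.repr g j * φ (μ j)) • (e j : H)))
        ((innerSL ℝ (e i)) (Φ g)) := h2.mapL (innerSL ℝ (e i))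
    have h4 : (fun j => (innerSL ℝ (e i)) ((e.repr g j * φ (μ j)) • (e j : H))) =
        (fun j => if j = i then φ (μ i) * ⟪e i, g⟫ else 0) := by
      funext j
      simp only [innerSL_apply_apply, inner_smul_right]
      have hon := orthonormal_iff_ite.mp e.orthonormal
      rcases eq_or_ne j i with rfl | hji
      · simp only [innerSL_apply_apply, inner_smul_right, hon j j, if_pos rfl, mul_one,
          e.repr_apply_apply, if_pos rfl]
        simp [mul_comm]
      · simp only [innerSL_apply_apply, inner_smul_right, hon i j, if_neg (Ne.symm hji),
          mul_zero, if_neg hji]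
    rw [h4] at h3
    have h5 := hasSum_ite_eq i (φ (μ i) * ⟪e i, g⟫)
    have := h3.unique h5
    simpa using this
  -- the coordinate equation
  have heq : ∀ i, (μ i + lam) * ⟪e i, x⟫ = -(lam * (φ (μ i) * ⟪e i, g⟫)) := by
    intro i
    have h1 : ⟪e i, (T + lam • ContinuousLinearMap.id ℝ H) flam⟫ = ⟪e i, T fρ + lam • fbar⟫ := by
      rw [hflam]
    simp only [ContinuousLinearMap.add_apply, ContinuousLinearMap.smul_apply,
      ContinuousLinearMap.id_apply, inner_add_right, inner_smul_right] at h1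
    rw [hcoordT flam i, hcoordT fρ i] at h1
    have h2 : ⟪e i, fρ⟫ - ⟪e i, fbar⟫ = φ (μ i) * ⟪e i, g⟫ := by
      rw [← inner_sub_right, hsrc, hΦg i]
    have h3 : ⟪e i, x⟫ = ⟪e i, flam⟫ - ⟪e i, fρ⟫ := inner_sub_right _ _ _
    beta_reduce at h1 h2 h3 ⊢
    linear_combination h1 - lam * h2 + (μ i + lam) * h3
  -- pointwise bound
  have hbd : ∀ i, ⟪e i, x⟫ ^ 2 ≤ (φ lam * ⟪e i, g⟫) ^ 2 := by
    intro i
    have hpos : 0 < μ i + lam := by linarith [(hμ i).1]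
    have habs : |⟪e i, x⟫| ≤ φ lam * |⟪e i, g⟫| := by
      have h1 : (μ i + lam) * |⟪e i, x⟫| = lam * φ (μ i) * |⟪e i, g⟫| := by
        have := congrArg abs (heq i)
        rw [abs_mul, abs_of_pos hpos, abs_neg, abs_mul, abs_mul,
          abs_of_pos hlam, abs_of_nonneg (hφnonneg _ (hμ i))] at this
        linarith [this.le, this.ge]
      have h2 : lam * φ (μ i) * |⟪e i, g⟫| ≤ (μ i + lam) * (φ lam * |⟪e i, g⟫|) := by
        have := key (μ i) (hμ i)
        nlinarith [abs_nonneg ⟪e i, g⟫]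
      rw [← mul_le_mul_iff_right₀ hpos, h1]
      exact h2
    calc ⟪e i, x⟫ ^ 2 = |⟪e i, x⟫| ^ 2 := (sq_abs _).symm
      _ ≤ (φ lam * |⟪e i, g⟫|) ^ 2 := by
          exact pow_le_pow_left₀ (abs_nonneg _) habs 2
      _ = (φ lam * ⟪e i, g⟫) ^ 2 := by
          rw [mul_pow, mul_pow, sq_abs]
  -- Parseval
  have hsx : HasSum (fun i => ⟪e i, x⟫ ^ 2) (‖x‖ ^ 2) := by
    have := e.hasSum_inner_mul_inner x x
    rw [real_inner_self_eq_norm_sq] at this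
    convert this using 2 with i
    · rfl
    rw [sq, real_inner_comm]
  have hsg : HasSum (fun i => (φ lam * ⟪e i, g⟫) ^ 2) ((φ lam) ^ 2 * ‖g‖ ^ 2) := by
    have := e.hasSum_inner_mul_inner g g
    rw [real_inner_self_eq_norm_sq] at this
    have := this.mul_left ((φ lam) ^ 2)
    convert this using 2 with i
    · rfl
    rw [mul_pow, sq ⟪e i, g⟫, real_inner_comm]
  have hle : ‖x‖ ^ 2 ≤ (φ lam) ^ 2 * ‖g‖ ^ 2 := hasSum_le hbd hsx hsg
  have hfin : ‖x‖ ≤ φ lam * ‖g‖ := by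
    have h1 : ‖x‖ ^ 2 ≤ (φ lam * ‖g‖) ^ 2 := by rw [mul_pow]; exact hle
    have h2 : 0 ≤ φ lam * ‖g‖ := mul_nonneg hφlam0 (norm_nonneg _)
    exact (pow_le_pow_iff_left₀ (norm_nonneg _) h2 two_ne_zero).mp h1
  calc ‖flam - fρ‖ = ‖x‖ := rfl
    _ ≤ φ lam * ‖g‖ := hfin
    _ ≤ φ lam * R := mul_le_mul_of_nonneg_left hg hφlam0
    _ = R * φ lam := mul_comm _ _
end

section
/- Let A and B be positive self-adjoint bounded invertible operators on a Hilbert space. Then ‖A^{-1/2} B^{1/2}‖ ≤ ‖A^{-1} B‖^{1/2}. -/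
set_option maxHeartbeats 1000000

/-- Auxiliary real inequality: if `a ^ 2^n ≤ K * b ^ (2^n - 1)` for all `n`, with
`a, b ≥ 0`, then `a ≤ b`. -/
lemma cordes_aux_le {a b K : ℝ} (ha : 0 ≤ a) (hb : 0 ≤ b)
    (h : ∀ n : ℕ, a ^ (2 ^ n) ≤ K * b ^ (2 ^ n - 1)) : a ≤ b := by
  by_contra hc
  push_neg at hc
  rcases eq_or_lt_of_le hb with hb0 | hb0
  · -- b = 0
    have h1 := h 1
    rw [← hb0] at h1
    norm_num at h1
    have ha0 : a = 0 := by nlinarith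
    rw [ha0] at hc
    exact absurd hc (not_lt.mpr hb)
  · have hab : 1 < a / b := (one_lt_div hb0).mpr hc
    obtain ⟨n, hn⟩ := pow_unbounded_of_one_lt (K / b) hab
    have h2 : (a / b) ^ n ≤ (a / b) ^ (2 ^ n) :=
      pow_le_pow_right₀ hab.le (Nat.le_of_lt (Nat.lt_two_pow_self (n := n)))
    have h3 : (a / b) ^ (2 ^ n) ≤ K / b := by
      rw [div_pow, div_le_div_iff₀ (pow_pos hb0 _) hb0]
      calc a ^ (2 ^ n) * b ≤ (K * b ^ (2 ^ n - 1)) * b :=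
            mul_le_mul_of_nonneg_right (h n) hb0.le
        _ = K * b ^ (2 ^ n) := by
            rw [mul_assoc, ← pow_succ]
            congr 2
            exact Nat.sub_add_cancel Nat.one_le_two_pow
    linarith

/-- Cordes-type inequality: for positive self-adjoint bounded invertible operators `A, B`,
`‖A^{-1/2} B^{1/2}‖ ≤ ‖A⁻¹ B‖^{1/2}`.  Square roots and inverses are encoded by
positive operators `sqA, sqB` squaring to `A, B` and two-sided inverses `invA, invSqA`. -/
theorem cordes_inequality
    {H : Type*} [NormedAddCommGroup H] [InnerProductSpace ℝ H] [CompleteSpace H]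
    (A B sqA sqB invA invSqA : H →L[ℝ] H)
    (hA : A.IsPositive) (hB : B.IsPositive)
    (hsqA : sqA.comp sqA = A) (hsqApos : sqA.IsPositive)
    (hsqB : sqB.comp sqB = B) (hsqBpos : sqB.IsPositive)
    (hinvA1 : invA.comp A = ContinuousLinearMap.id ℝ H)
    (hinvA2 : A.comp invA = ContinuousLinearMap.id ℝ H)
    (hinvSqA1 : invSqA.comp sqA = ContinuousLinearMap.id ℝ H)
    (hinvSqA2 : sqA.comp invSqA = ContinuousLinearMap.id ℝ H) :
    ‖invSqA.comp sqB‖ ≤ Real.sqrt ‖invA.comp B‖ := by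
  rcases subsingleton_or_nontrivial H with hH | hH
  · have : invSqA.comp sqB = 0 := by ext x; exact Subsingleton.elim _ _
    rw [this, norm_zero]
    exact Real.sqrt_nonneg _
  -- translate to ring operations
  have hsqA' : sqA * sqA = A := hsqA
  have hsqB' : sqB * sqB = B := hsqB
  have hinvA1' : invA * A = 1 := hinvA1
  have hinvA2' : A * invA = 1 := hinvA2
  have hinvSqA1' : invSqA * sqA = 1 := hinvSqA1
  have hinvSqA2' : sqA * invSqA = 1 := hinvSqA2
  -- self-adjointness facts
  have hAsa : star A = A := hA.isSelfAdjoint.star_eq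
  have hsqAsa : star sqA = sqA := hsqApos.isSelfAdjoint.star_eq
  have hsqBsa : star sqB = sqB := hsqBpos.isSelfAdjoint.star_eq
  have hinvAsa : star invA = invA := by
    have h1 : star invA * A = 1 := by
      rw [← hAsa, ← star_mul, hinvA2', star_one]
    calc star invA = star invA * (A * invA) := by rw [hinvA2', mul_one]
      _ = (star invA * A) * invA := by rw [mul_assoc]
      _ = invA := by rw [h1, one_mul]
  have hinvSqAsa : star invSqA = invSqA := by
    have h1 : star invSqA * sqA = 1 := by
      rw [← hsqAsa, ← star_mul, hinvSqA2', star_one]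
    calc star invSqA = star invSqA * (sqA * invSqA) := by rw [hinvSqA2', mul_one]
      _ = (star invSqA * sqA) * invSqA := by rw [mul_assoc]
      _ = invSqA := by rw [h1, one_mul]
  -- invSqA squared equals invA
  have hsq_inv : invSqA * invSqA = invA := by
    have h1 : (invSqA * invSqA) * A = 1 := by
      rw [← hsqA', show invSqA * invSqA * (sqA * sqA) = invSqA * (invSqA * sqA) * sqA by
        simp only [mul_assoc], hinvSqA1', mul_one, hinvSqA1']
    calc invSqA * invSqA = (invSqA * invSqA) * (A * invA) := by rw [hinvA2', mul_one]
      _ = ((invSqA * invSqA) * A) * invA := by simp only [mul_assoc]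
      _ = invA := by rw [h1, one_mul]
  set T : H →L[ℝ] H := invSqA * sqB with hT
  set C : H →L[ℝ] H := invA * B with hC
  set S : H →L[ℝ] H := sqB * (invA * sqB) with hS
  have hstarT : star T = sqB * invSqA := by
    rw [hT, star_mul, hsqBsa, hinvSqAsa]
  have hSTT : star T * T = S := by
    rw [hstarT, hT, hS, mul_assoc, ← mul_assoc invSqA, hsq_inv]
  have hSsa : IsSelfAdjoint S := hSTT ▸ IsSelfAdjoint.star_mul_self T
  -- powers of S
  have hsqBmul : ∀ X : H →L[ℝ] H, sqB * (sqB * X) = B * X := fun X => by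
    rw [← mul_assoc, hsqB']
  have hpow : ∀ m : ℕ, S ^ (m + 1) = sqB * (C ^ m * (invA * sqB)) := by
    intro m
    induction m with
    | zero => simp [hS]
    | succ m ih =>
      rw [pow_succ, ih, hS]
      simp only [pow_succ, hC, mul_assoc, hsqBmul]
  -- norm bound on powers
  set K : ℝ := ‖sqB‖ * (‖invA‖ * ‖sqB‖) with hK
  have hbound : ∀ m : ℕ, ‖S ^ (m + 1)‖ ≤ K * ‖C‖ ^ m := by
    intro m
    rw [hpow m, hK]
    calc ‖sqB * (C ^ m * (invA * sqB))‖ ≤ ‖sqB‖ * ‖C ^ m * (invA * sqB)‖ := norm_mul_le _ _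
      _ ≤ ‖sqB‖ * (‖C ^ m‖ * ‖invA * sqB‖) := by
          gcongr; exact norm_mul_le _ _
      _ ≤ ‖sqB‖ * (‖C‖ ^ m * (‖invA‖ * ‖sqB‖)) := by
          gcongr
          · exact norm_pow_le _ _
          · exact norm_mul_le _ _
      _ = ‖sqB‖ * (‖invA‖ * ‖sqB‖) * ‖C‖ ^ m := by ring
  -- key: ‖S‖ ≤ ‖C‖ via the self-adjoint power identity
  have hSpow : ∀ n : ℕ, ‖S‖ ^ (2 ^ n) = ‖S ^ (2 ^ n)‖ := by
    intro n
    have := @IsSelfAdjoint.nnnorm_pow_two_pow (H →L[ℝ] H) _ _ _ S hSsa n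
    have := congrArg NNReal.toReal this
    simpa using this.symm
  have hKey : ‖S‖ ≤ ‖C‖ := by
    apply cordes_aux_le (norm_nonneg S) (norm_nonneg C)
    intro n
    rw [hSpow n]
    have h21 : 2 ^ n - 1 + 1 = 2 ^ n := Nat.sub_add_cancel Nat.one_le_two_pow
    calc ‖S ^ (2 ^ n)‖ = ‖S ^ (2 ^ n - 1 + 1)‖ := by rw [h21]
      _ ≤ K * ‖C‖ ^ (2 ^ n - 1) := hbound _
  -- conclude
  have hTnorm : ‖T‖ * ‖T‖ = ‖S‖ := by
    rw [← hSTT]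
    exact CStarRing.norm_star_mul_self.symm
  have : ‖T‖ ^ 2 ≤ ‖C‖ := by rw [pow_two, hTnorm]; exact hKey
  have hfinal : ‖T‖ ≤ Real.sqrt ‖C‖ := by
    have := Real.sqrt_le_sqrt this
    rwa [Real.sqrt_sq (norm_nonneg T)] at this
  exact hfinal
end

section
/- Let T and T* be positive self-adjoint compact operators on a separable Hilbert space, φ a continuous increasing function with φ(0)=0, and suppose φ(T) = R φ(T*) for a bounded invertible operator R. Then for every j ∈ ℕ, φ(s_j(T)) ≤ ‖R‖ φ(s_j(T*)) and φ(s_j(T*)) ≤ ‖R^{-1}‖ φ(s_j(T)). -/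
open scoped InnerProductSpace

section Aux
variable {H : Type*} [NormedAddCommGroup H] [InnerProductSpace ℝ H] [CompleteSpace H]

lemma diag_coeff (b : HilbertBasis ℕ ℝ H) (A : H →L[ℝ] H) (α : ℕ → ℝ)
    (hA : ∀ i, A (b i) = α i • b i) (x : H) (k : ℕ) :
    ⟪b k, A x⟫_ℝ = α k * ⟪b k, x⟫_ℝ := by
  classical
  have h2 : HasSum (fun i => A (b.repr x i • b i)) (A x) := (b.hasSum_repr x).mapL A
  simp only [map_smul, hA, smul_smul] at h2
  have h4 := h2.mapL (innerSL ℝ (b k))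
  have horth := orthonormal_iff_ite.mp b.orthonormal
  simp only [innerSL_apply_apply, real_inner_smul_right, horth, mul_ite, mul_one, mul_zero] at h4
  have h5 : HasSum (fun i : ℕ => if i = k then b.repr x k * α k else 0) ⟪b k, A x⟫_ℝ := by
    refine h4.congr_fun fun i => ?_
    rcases eq_or_ne i k with rfl | h
    · simp
    · rw [if_neg h, if_neg (Ne.symm h)]
  have := h5.unique (hasSum_ite_eq k _)
  rw [this, b.repr_apply_apply, mul_comm]

lemma parseval (b : HilbertBasis ℕ ℝ H) (y : H) :
    HasSum (fun i => ⟪b i, y⟫_ℝ ^ 2) (‖y‖ ^ 2) := by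
  have := b.hasSum_inner_mul_inner y y
  rw [real_inner_self_eq_norm_sq] at this
  exact this.congr_fun (fun i => by rw [sq, real_inner_comm y (b i)])

lemma diag_norm_le (b : HilbertBasis ℕ ℝ H) (A : H →L[ℝ] H) (α : ℕ → ℝ)
    (hA : ∀ i, A (b i) = α i • b i) (x : H) (C : ℝ) (hC : 0 ≤ C)
    (h : ∀ i, ⟪b i, x⟫_ℝ ≠ 0 → |α i| ≤ C) : ‖A x‖ ≤ C * ‖x‖ := by
  have hx := parseval b x
  have hAx := parseval b (A x)
  simp only [diag_coeff b A α hA x, mul_pow] at hAx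
  have hle : ∀ i, α i ^ 2 * ⟪b i, x⟫_ℝ ^ 2 ≤ C ^ 2 * ⟪b i, x⟫_ℝ ^ 2 := by
    intro i
    by_cases hi : ⟪b i, x⟫_ℝ = 0
    · simp [hi]
    · exact mul_le_mul_of_nonneg_right
        (by simpa [sq_abs] using pow_le_pow_left₀ (abs_nonneg _) (h i hi) 2)
        (sq_nonneg _)
  have hsum : ‖A x‖ ^ 2 ≤ C ^ 2 * ‖x‖ ^ 2 := by
    calc ‖A x‖ ^ 2 = ∑' i, α i ^ 2 * ⟪b i, x⟫_ℝ ^ 2 := hAx.tsum_eq.symm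
    _ ≤ ∑' i, C ^ 2 * ⟪b i, x⟫_ℝ ^ 2 :=
        hAx.summable.tsum_le_tsum hle (hx.summable.mul_left _)
    _ = C ^ 2 * ‖x‖ ^ 2 := by rw [tsum_mul_left, hx.tsum_eq]
  exact le_of_pow_le_pow_left₀ two_ne_zero (by positivity) (by rw [mul_pow]; exact hsum)

lemma diag_norm_ge (b : HilbertBasis ℕ ℝ H) (A : H →L[ℝ] H) (α : ℕ → ℝ)
    (hA : ∀ i, A (b i) = α i • b i) (x : H) (c : ℝ) (hc : 0 ≤ c)
    (h : ∀ i, ⟪b i, x⟫_ℝ ≠ 0 → c ≤ α i) : c * ‖x‖ ≤ ‖A x‖ := by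
  have hx := parseval b x
  have hAx := parseval b (A x)
  simp only [diag_coeff b A α hA x, mul_pow] at hAx
  have hle : ∀ i, c ^ 2 * ⟪b i, x⟫_ℝ ^ 2 ≤ α i ^ 2 * ⟪b i, x⟫_ℝ ^ 2 := by
    intro i
    by_cases hi : ⟪b i, x⟫_ℝ = 0
    · simp [hi]
    · exact mul_le_mul_of_nonneg_right (pow_le_pow_left₀ hc (h i hi) 2) (sq_nonneg _)
  have hsum : c ^ 2 * ‖x‖ ^ 2 ≤ ‖A x‖ ^ 2 := by
    calc c ^ 2 * ‖x‖ ^ 2 = ∑' i, c ^ 2 * ⟪b i, x⟫_ℝ ^ 2 := by rw [tsum_mul_left, hx.tsum_eq]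
    _ ≤ ∑' i, α i ^ 2 * ⟪b i, x⟫_ℝ ^ 2 :=
        (hx.summable.mul_left _).tsum_le_tsum hle hAx.summable
    _ = ‖A x‖ ^ 2 := hAx.tsum_eq
  exact le_of_pow_le_pow_left₀ two_ne_zero (norm_nonneg _)
    (by rw [mul_pow]; exact hsum)

lemma exists_test (b1 b2 : HilbertBasis ℕ ℝ H) (j : ℕ) :
    ∃ x : H, x ≠ 0 ∧ (∀ i, j < i → ⟪b1 i, x⟫_ℝ = 0) ∧ (∀ i, i < j → ⟪b2 i, x⟫_ℝ = 0) := by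
  classical
  set xmap : (Fin (j + 1) → ℝ) →ₗ[ℝ] H := Fintype.linearCombination ℝ (fun k : Fin (j+1) => b1 k)
  have hxmap : ∀ d : Fin (j+1) → ℝ, xmap d = ∑ k : Fin (j+1), d k • b1 (k : ℕ) := fun d => rfl
  have horth := orthonormal_iff_ite.mp b1.orthonormal
  have hcoef : ∀ (d : Fin (j+1) → ℝ) (i : ℕ),
      ⟪b1 i, xmap d⟫_ℝ = if h : i < j + 1 then d ⟨i, h⟩ else 0 := by
    intro d i
    rw [hxmap, inner_sum]
    simp only [real_inner_smul_right, horth, mul_ite, mul_one, mul_zero]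
    split_ifs with h
    · rw [Finset.sum_eq_single (⟨i, h⟩ : Fin (j+1))]
      · simp
      · intro k _ hk
        rw [if_neg]
        intro he
        exact hk (by ext; exact he.symm)
      · simp
    · refine Finset.sum_eq_zero fun k _ => ?_
      rw [if_neg]
      intro he
      exact h (he ▸ k.isLt)
  set f : (Fin (j + 1) → ℝ) →ₗ[ℝ] (Fin j → ℝ) :=
    LinearMap.pi (fun i : Fin j => ((innerSL ℝ (b2 (i : ℕ))).toLinearMap).comp xmap)
  have hninj : ¬ Function.Injective f := by
    intro hinj
    have := LinearMap.finrank_le_finrank_of_injective hinj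
    rw [Module.finrank_fin_fun, Module.finrank_fin_fun] at this
    omega
  rw [Function.not_injective_iff] at hninj
  obtain ⟨c, c', hfcc, hne⟩ := hninj
  refine ⟨xmap (c - c'), ?_, ?_, ?_⟩
  · intro hx0
    have hd : c - c' ≠ 0 := sub_ne_zero.mpr hne
    obtain ⟨k, hk⟩ := Function.ne_iff.mp hd
    have := hcoef (c - c') k
    rw [hx0, inner_zero_right, dif_pos k.isLt] at this
    exact hk (by simpa using this.symm)
  · intro i hi
    rw [hcoef, dif_neg (by omega)]
  · intro i hi
    have : f (c - c') = 0 := by rw [map_sub, hfcc, sub_self]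
    have := congrFun this ⟨i, hi⟩
    simpa [f] using this

lemma key (b1 b2 : HilbertBasis ℕ ℝ H) (A1 A2 R : H →L[ℝ] H) (α β : ℕ → ℝ)
    (hA1 : ∀ i, A1 (b1 i) = α i • b1 i) (hA2 : ∀ i, A2 (b2 i) = β i • b2 i)
    (hαa : Antitone α) (hβa : Antitone β) (hα0 : ∀ i, 0 ≤ α i) (hβ0 : ∀ i, 0 ≤ β i)
    (hrel : ∀ x, A1 x = R (A2 x)) (j : ℕ) : α j ≤ ‖R‖ * β j := by
  obtain ⟨x, hx0, h1, h2⟩ := exists_test b1 b2 j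
  have low : α j * ‖x‖ ≤ ‖A1 x‖ := by
    refine diag_norm_ge b1 A1 α hA1 x (α j) (hα0 j) fun i hi => ?_
    have : i ≤ j := by by_contra h; exact hi (h1 i (by omega))
    exact hαa this
  have up : ‖A2 x‖ ≤ β j * ‖x‖ := by
    refine diag_norm_le b2 A2 β hA2 x (β j) (hβ0 j) fun i hi => ?_
    have : j ≤ i := by by_contra h; exact hi (h2 i (by omega))
    rw [abs_of_nonneg (hβ0 i)]
    exact hβa this
  have chain : α j * ‖x‖ ≤ (‖R‖ * β j) * ‖x‖ := by
    calc α j * ‖x‖ ≤ ‖A1 x‖ := low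
    _ = ‖R (A2 x)‖ := by rw [hrel]
    _ ≤ ‖R‖ * ‖A2 x‖ := R.le_opNorm _
    _ ≤ ‖R‖ * (β j * ‖x‖) := mul_le_mul_of_nonneg_left up (norm_nonneg _)
    _ = (‖R‖ * β j) * ‖x‖ := by ring
  exact le_of_mul_le_mul_right chain (norm_pos_iff.mpr hx0)

end Aux

/-- Transfer of singular values under the link condition `φ(T) = R φ(T⋆)`.
`T` and `T⋆` are positive compact self-adjoint operators diagonalized by Hilbert bases
`e`, `etil` with decreasingly ordered nonnegative eigenvalues `μ`, `ν` (so that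
`s_j(T) = μ j`, `s_j(T⋆) = ν j`), and the functional calculus `φ(T)`, `φ(T⋆)` is encoded
by the operators `ΦT`, `ΦTs` acting diagonally by `φ`.  If `ΦT = R ∘ ΦTs` with `R`
boundedly invertible (inverse `Rinv`), then `φ(s_j(T)) ≤ ‖R‖ φ(s_j(T⋆))` and
`φ(s_j(T⋆)) ≤ ‖R⁻¹‖ φ(s_j(T))` for every `j`. -/
theorem singular_value_transfer
    {H : Type*} [NormedAddCommGroup H] [InnerProductSpace ℝ H] [CompleteSpace H]
    (e etil : HilbertBasis ℕ ℝ H)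
    (T Ts ΦT ΦTs R Rinv : H →L[ℝ] H)
    (μ ν : ℕ → ℝ) (φ : ℝ → ℝ)
    (hT : T.IsPositive) (hTs : Ts.IsPositive)
    (hTc : IsCompactOperator T) (hTsc : IsCompactOperator Ts)
    (hTe : ∀ i, T (e i) = μ i • e i) (hTse : ∀ i, Ts (etil i) = ν i • etil i)
    (hμ : ∀ i, 0 ≤ μ i) (hν : ∀ i, 0 ≤ ν i)
    (hμa : Antitone μ) (hνa : Antitone ν)
    (hΦT : ∀ i, ΦT (e i) = φ (μ i) • e i) (hΦTs : ∀ i, ΦTs (etil i) = φ (ν i) • etil i)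
    (hφc : Continuous φ) (hφm : StrictMono φ) (hφ0 : φ 0 = 0)
    (hrel : ΦT = R.comp ΦTs)
    (hR1 : R.comp Rinv = ContinuousLinearMap.id ℝ H)
    (hR2 : Rinv.comp R = ContinuousLinearMap.id ℝ H) :
    ∀ j : ℕ, φ (μ j) ≤ ‖R‖ * φ (ν j) ∧ φ (ν j) ≤ ‖Rinv‖ * φ (μ j) := by
  have hαa : Antitone (φ ∘ μ) := hφm.monotone.comp_antitone hμa
  have hβa : Antitone (φ ∘ ν) := hφm.monotone.comp_antitone hνa
  have hα0 : ∀ i, 0 ≤ φ (μ i) := fun i => hφ0 ▸ hφm.monotone (hμ i)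
  have hβ0 : ∀ i, 0 ≤ φ (ν i) := fun i => hφ0 ▸ hφm.monotone (hν i)
  have hrel1 : ∀ x, ΦT x = R (ΦTs x) := fun x => by rw [hrel]; rfl
  have hrel2 : ∀ x, ΦTs x = Rinv (ΦT x) := by
    intro x
    rw [hrel1 x, ← ContinuousLinearMap.comp_apply, hR2]
    rfl
  intro j
  constructor
  · exact key e etil ΦT ΦTs R (φ ∘ μ) (φ ∘ ν) hΦT hΦTs hαa hβa hα0 hβ0 hrel1 j
  · exact key etil e ΦTs ΦT Rinv (φ ∘ ν) (φ ∘ μ) hΦTs hΦT hβa hαa hβ0 hα0 hrel2 j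
end
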